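/- Let −1 < α < 0 be real and for n ≥ 1 let d_n = n(n+α)/((2n+α−1)(2n+α+1)). Then {d_n} determines its parameters uniquely: every parameter sequence {g_n}_{n≥0} of {d_n} (i.e., every sequence with 0 ≤ g_0 < 1, 0 < g_n < 1 for n ≥ 1, and d_n = (1 − g_{n−1})·g_n for all n ≥ 1) satisfies g_n = n/(2n+α+1) for all n ≥ 0. In other words, {d_n} is a single parameter positive chain sequence. -/

import Mathlib

open Finset


/-- For real `−1 < α < 0`, the Laguerre chain sequence
`dₙ = n(n+α)/((2n+α−1)(2n+α+1))` determines its parameters uniquely: every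
parameter sequence `{gₙ}` of `{dₙ}` satisfies `gₙ = n/(2n+α+1)` for all `n ≥ 0`.
In other words, `{dₙ}` is a single parameter positive chain sequence. -/
theorem stmt_16 (α : ℝ) (hα1 : -1 < α) (hα2 : α < 0) (d : ℕ → ℝ)
    (hd : ∀ n ≥ 1, d n = (n : ℝ) * ((n : ℝ) + α) /
      ((2 * (n : ℝ) + α - 1) * (2 * (n : ℝ) + α + 1))) :
    ∀ g : ℕ → ℝ, (0 ≤ g 0 ∧ g 0 < 1) → (∀ n ≥ 1, 0 < g n ∧ g n < 1) →
      (∀ n ≥ 1, d n = (1 - g (n-1)) * g n) →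
      ∀ n : ℕ, g n = (n : ℝ) / (2 * (n : ℝ) + α + 1) := by
  intro g hg0 hgn hrec
  set m : ℕ → ℝ := fun n => (n : ℝ) / (2 * (n : ℝ) + α + 1) with hmdef
  show ∀ n, g n = m n
  set β : ℝ := α + 1 with hβdef
  have hβ0 : 0 < β := by simp [hβdef]; linarith
  have hβ1 : β < 1 := by simp [hβdef]; linarith
  have hden : ∀ n : ℕ, 0 < 2 * (n : ℝ) + α + 1 := by
    intro n; have := Nat.cast_nonneg (α := ℝ) n; linarith
  have hm_lt1 : ∀ n : ℕ, m n < 1 := by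
    intro n
    have h := hden n
    rw [hmdef]
    simp only
    rw [div_lt_one h]
    have := Nat.cast_nonneg (α := ℝ) n; linarith
  have hm0 : m 0 = 0 := by simp [hmdef]
  have hm_pos : ∀ n : ℕ, 0 < m (n+1) := by
    intro n
    have h := hden (n+1)
    apply div_pos _ h
    positivity
  -- key combined recurrence
  have hgrec : ∀ n : ℕ, d (n+1) = (1 - g n) * g (n+1) := by
    intro n
    have := hrec (n+1) (by omega)
    simpa using this
  have hmrec : ∀ n : ℕ, d (n+1) = (1 - m n) * m (n+1) := by
    intro n
    have hd1 := hd (n+1) (by omega)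
    have h1 : (2*(n:ℝ)+α+1) ≠ 0 := (hden n).ne'
    have h2 : (2*(n:ℝ)+α+3) ≠ 0 := by have := hden (n+1); push_cast at this; intro h; linarith
    rw [hd1, hmdef]
    simp only
    push_cast
    have e1 : (2*((n:ℝ)+1)+α-1) = 2*(n:ℝ)+α+1 := by ring
    have e2 : (2*((n:ℝ)+1)+α+1) = 2*(n:ℝ)+α+3 := by ring
    rw [e1, e2]
    rw [one_sub_div h1, div_mul_div_comm]
    congr 1 <;> ring
  have hkey : ∀ n : ℕ, (1 - g n) * g (n+1) = (1 - m n) * m (n+1) := by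
    intro n; rw [← hgrec n, ← hmrec n]
  have hg_lt1 : ∀ n : ℕ, g n < 1 := by
    intro n
    cases n with
    | zero => exact hg0.2
    | succ k => exact (hgn (k+1) (by omega)).2
  -- it suffices to show g 0 = 0
  suffices h0 : g 0 = 0 by
    intro n
    induction n with
    | zero => rw [h0, hm0]
    | succ k ih =>
        have hk := hkey k
        rw [ih] at hk
        have h1 : (1 : ℝ) - m k ≠ 0 := by have := hm_lt1 k; intro h; linarith [sub_eq_zero.mp h]
        exact mul_left_cancel₀ h1 hk
  by_contra hne
  have hg0pos : 0 < g 0 := lt_of_le_of_ne hg0.1 (Ne.symm hne)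
  -- strict inequality m n < g n
  have hmlt : ∀ n : ℕ, m n < g n := by
    intro n
    induction n with
    | zero => rw [hm0]; exact hg0pos
    | succ k ih =>
        have hk := hkey k
        have h1 : (0:ℝ) < 1 - g k := by linarith [hg_lt1 k]
        have h2 := hm_pos k
        nlinarith [hk, h1, h2, ih]
  have hx_pos : ∀ n : ℕ, 0 < g n - m n := fun n => sub_pos.mpr (hmlt n)
  -- the quantity a n
  set a : ℕ → ℝ := fun n => (1 - m n) / (g n - m n) with hadef
  have ha1 : ∀ n : ℕ, 1 < a n := by
    intro n
    rw [hadef]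
    simp only
    rw [lt_div_iff₀ (hx_pos n)]
    linarith [hg_lt1 n]
  -- recurrence for a
  have key2 : ∀ n : ℕ, a (n+1) = (1 + β / ((n:ℝ)+1)) * (a n - 1) := by
    intro n
    have e1 : (g (n+1) - m (n+1)) * (1 - g n) = m (n+1) * (g n - m n) := by
      linear_combination hkey n
    have hz : (1 - m (n+1)) * ((n:ℝ)+1) = m (n+1) * ((n:ℝ) + 1 + β) := by
      have h2 := (hden (n+1)).ne'
      push_cast at h2 ⊢
      rw [hmdef, hβdef]
      simp only
      push_cast
      rw [one_sub_div h2, div_mul_eq_mul_div, div_mul_eq_mul_div]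
      congr 1 <;> ring
    have hx1 := (hx_pos n).ne'
    have hx2 := (hx_pos (n+1)).ne'
    have hn1 : ((n:ℝ)+1) ≠ 0 := by positivity
    rw [hadef]
    simp only
    field_simp
    nlinarith [e1, hz, hx_pos n, hx_pos (n+1)]
  -- product P and partial sums
  have hP_pos : ∀ n : ℕ, 0 < ∏ k ∈ range n, (1 + β / ((k:ℝ)+1)) := by
    intro n
    apply Finset.prod_pos
    intro k _
    have : (0:ℝ) < (k:ℝ)+1 := by positivity
    positivity
  have hP_le : ∀ n : ℕ, (∏ k ∈ range n, (1 + β / ((k:ℝ)+1))) ≤ (n:ℝ) + 1 := by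
    intro n
    induction n with
    | zero => simp
    | succ k ih =>
        rw [Finset.prod_range_succ]
        have h1 : (0:ℝ) < (k:ℝ)+1 := by positivity
        have h2 : 1 + β/((k:ℝ)+1) ≤ 1 + 1/((k:ℝ)+1) := by
          gcongr <;> linarith
        have h3 : (0:ℝ) ≤ 1 + β/((k:ℝ)+1) := by positivity
        calc (∏ x ∈ range k, (1 + β / ((x:ℝ)+1))) * (1 + β/((k:ℝ)+1))
            ≤ ((k:ℝ)+1) * (1 + 1/((k:ℝ)+1)) := by
              apply mul_le_mul ih h2 h3 (by positivity)
          _ ≤ ((k+1:ℕ) : ℝ) + 1 := by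
              have hne : ((k:ℝ)+1) ≠ 0 := by positivity
              push_cast
              rw [mul_add, mul_one_div, div_self hne]
              linarith
  -- identity a n = P n * (a 0 - T n)
  have hab : ∀ n : ℕ, a n = (∏ k ∈ range n, (1 + β / ((k:ℝ)+1))) *
      (a 0 - ∑ k ∈ range n, 1 / ∏ j ∈ range k, (1 + β / ((j:ℝ)+1))) := by
    intro n
    induction n with
    | zero => simp
    | succ k ih =>
        have hPk := (hP_pos k).ne'
        rw [key2 k, ih, Finset.prod_range_succ, Finset.sum_range_succ]
        field_simp
        ring
  -- contradiction with harmonic divergence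
  have hT : ∀ n : ℕ, (∑ k ∈ range n, (1 / ((k:ℝ)+1))) < a 0 := by
    intro n
    have h1 : 0 < a 0 - ∑ k ∈ range n, 1 / ∏ j ∈ range k, (1 + β / ((j:ℝ)+1)) := by
      have := ha1 n
      have h2 := hP_pos n
      by_contra hc
      push_neg at hc
      have := hab n
      nlinarith
    have h2 : (∑ k ∈ range n, (1 / ((k:ℝ)+1))) ≤
        ∑ k ∈ range n, 1 / ∏ j ∈ range k, (1 + β / ((j:ℝ)+1)) := by
      apply Finset.sum_le_sum
      intro k _
      apply one_div_le_one_div_of_le (hP_pos k) (hP_le k)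
    linarith
  obtain ⟨n, hn⟩ := (Filter.tendsto_atTop.mp Real.tendsto_sum_range_one_div_nat_succ_atTop (a 0)).exists
  linarith [hT n]
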